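/- Let (X,d) be a metric space with marked point a, and let r̃ = {r_n} and t̃ = {t_n} be normalizing sequences equivalent at a. Then at least one of the following holds: (i) there is a real number c > 0 with lim_{n→∞} r_n/t_n = c; (ii) both r̃ and t̃ are confluented at a (i.e., every sequence x̃ converging to a that is mutually stable with ã w.r.t. r̃ satisfies d̃_{r̃}(x̃,ã)=0, and likewise for t̃). -/

import Mathlib

open Filter Topology

/-- A normalizing sequence: positive reals tending to 0. -/
def Normalizing (r : ℕ → ℝ) : Prop :=
  (∀ n, 0 < r n) ∧ Tendsto r atTop (nhds 0)

/-- Two sequences in `X` are mutually stable w.r.t. `r`: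
the limit of `dist (x n) (y n) / r n` exists and is finite. -/
def MutuallyStable {X : Type*} [MetricSpace X] (r : ℕ → ℝ) (x y : ℕ → X) : Prop :=
  ∃ L : ℝ, Tendsto (fun n => dist (x n) (y n) / r n) atTop (nhds L)

/-- The normalized limit distance `d̃`. -/
noncomputable def dtilde {X : Type*} [MetricSpace X] (r : ℕ → ℝ) (x y : ℕ → X) : ℝ :=
  limUnder atTop (fun n => dist (x n) (y n) / r n)

/-- A family is self-stable if every two members are mutually stable. -/
def SelfStable {X : Type*} [MetricSpace X] (r : ℕ → ℝ) (F : Set (ℕ → X)) : Prop :=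
  ∀ x ∈ F, ∀ y ∈ F, MutuallyStable r x y

/-- A family is maximal self-stable if it is self-stable and maximal with that property. -/
def MaximalSelfStable {X : Type*} [MetricSpace X] (r : ℕ → ℝ) (F : Set (ℕ → X)) : Prop :=
  SelfStable r F ∧ ∀ G, SelfStable r G → F ⊆ G → G = F

/-- Two normalizing sequences are equivalent at `a`. -/
def EquivAt {X : Type*} [MetricSpace X] (a : X) (r t : ℕ → ℝ) : Prop :=
  ∀ F : Set (ℕ → X), (fun _ => a) ∈ F → (SelfStable r F ↔ SelfStable t F)

/-- A normalizing sequence is confluented at `a`: every sequence mutually stable with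
the constant sequence `ã` has normalized distance 0 to it. -/
def Confluented {X : Type*} [MetricSpace X] (a : X) (r : ℕ → ℝ) : Prop :=
  ∀ x : ℕ → X, MutuallyStable r x (fun _ => a) →
    Tendsto (fun n => dist (x n) a / r n) atTop (nhds 0)

private lemma tendsto_two_mul' : Tendsto (fun n : ℕ => 2 * n) atTop atTop :=
  tendsto_atTop_mono (fun n => by simp only [id_eq]; omega) tendsto_id

private lemma tendsto_two_mul_add_one' : Tendsto (fun n : ℕ => 2 * n + 1) atTop atTop :=
  tendsto_atTop_mono (fun n => by simp only [id_eq]; omega) tendsto_id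

lemma keyA {X : Type*} [MetricSpace X] (a : X) (r t : ℕ → ℝ)
    (hr : ∀ n, 0 < r n) (ht : ∀ n, 0 < t n) (heq : EquivAt a r t)
    (x : ℕ → X) {L : ℝ} (hL : 0 < L)
    (hx : Tendsto (fun n => dist (x n) a / r n) atTop (nhds L)) :
    ∃ M : ℝ, 0 < M ∧ Tendsto (fun n => dist (x n) a / t n) atTop (nhds M) := by
  have hzero : ∀ (s : ℕ → ℝ) (u : ℕ → X),
      Tendsto (fun n => dist (u n) (u n) / s n) atTop (nhds 0) := by
    intro s u
    simp only [dist_self, zero_div]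
    exact tendsto_const_nhds
  have hF : SelfStable r {(fun _ => a), x} := by
    intro u hu v hv
    rcases hu with rfl | rfl <;> rcases hv with rfl | rfl
    · exact ⟨0, hzero r _⟩
    · exact ⟨L, by simpa [dist_comm] using hx⟩
    · exact ⟨L, hx⟩
    · exact ⟨0, hzero r _⟩
  have hFt : SelfStable t {(fun _ => a), x} := (heq _ (Set.mem_insert _ _)).mp hF
  obtain ⟨M, hM⟩ := hFt x (by simp) (fun _ => a) (by simp)
  have hM0 : 0 ≤ M := ge_of_tendsto' hM fun n => div_nonneg dist_nonneg (ht n).le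
  rcases hM0.lt_or_eq with hMpos | hMeq
  · exact ⟨M, hMpos, hM⟩
  exfalso
  have hM' : Tendsto (fun n => dist (x n) a / t n) atTop (nhds 0) := hMeq ▸ hM
  set y : ℕ → X := fun n => if Even n then x n else a with hy
  have hbound : ∀ u ∈ ({(fun _ => a), x, y} : Set (ℕ → X)),
      ∀ n, dist (u n) a ≤ dist (x n) a := by
    intro u hu n
    rcases hu with rfl | rfl | rfl
    · simpa using dist_nonneg
    · exact le_refl _
    · by_cases h : Even n <;> simp [hy, h, dist_nonneg]
  have hGt : SelfStable t {(fun _ => a), x, y} := by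
    intro u hu v hv
    refine ⟨0, squeeze_zero (g := fun n => 2 * (dist (x n) a / t n))
      (fun n => div_nonneg dist_nonneg (ht n).le) (fun n => ?_) ?_⟩
    · have h1 := hbound u hu n
      have h2 := hbound v hv n
      have htri : dist (u n) (v n) ≤ 2 * dist (x n) a := by
        calc dist (u n) (v n) ≤ dist (u n) a + dist a (v n) := dist_triangle _ _ _
          _ ≤ dist (x n) a + dist (x n) a := by rw [dist_comm a]; linarith
          _ = 2 * dist (x n) a := by ring
      show dist (u n) (v n) / t n ≤ 2 * (dist (x n) a / t n)
      rw [← mul_div_assoc]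
      exact div_le_div_of_nonneg_right htri (ht n).le
    · simpa using hM'.const_mul 2
  have hGr : SelfStable r {(fun _ => a), x, y} := (heq _ (Set.mem_insert _ _)).mpr hGt
  obtain ⟨K, hK⟩ := hGr y (by simp) (fun _ => a) (by simp)
  have hKeven : Tendsto (fun n => dist (x (2 * n)) a / r (2 * n)) atTop (nhds K) := by
    refine (hK.comp tendsto_two_mul').congr fun n => ?_
    simp [hy, even_two_mul]
  have hxeven : Tendsto (fun n => dist (x (2 * n)) a / r (2 * n)) atTop (nhds L) :=
    hx.comp tendsto_two_mul'
  have hKL : K = L := tendsto_nhds_unique hKeven hxeven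
  have hKodd : Tendsto (fun n : ℕ => (0 : ℝ)) atTop (nhds K) := by
    refine (hK.comp tendsto_two_mul_add_one').congr fun n => ?_
    have hodd : ¬ Even (2 * n + 1) := by simp [Nat.even_add_one]
    simp [hy, hodd]
  have hK0 : K = 0 := tendsto_nhds_unique hKodd tendsto_const_nhds
  rw [hKL] at hK0
  linarith

lemma keyB {X : Type*} [MetricSpace X] (a : X) (r t : ℕ → ℝ)
    (hr : ∀ n, 0 < r n) (ht : ∀ n, 0 < t n) (x : ℕ → X) {P Q : ℝ} (hP : 0 < P)
    (h1 : Tendsto (fun n => dist (x n) a / r n) atTop (nhds P))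
    (h2 : Tendsto (fun n => dist (x n) a / t n) atTop (nhds Q)) :
    Tendsto (fun n => r n / t n) atTop (nhds (Q / P)) := by
  have hev : ∀ᶠ n in atTop, 0 < dist (x n) a := by
    have h := h1.eventually (eventually_gt_nhds (by linarith : P / 2 < P))
    filter_upwards [h] with n hn
    by_contra hcon
    push_neg at hcon
    have hd : dist (x n) a = 0 := le_antisymm hcon dist_nonneg
    rw [hd, zero_div] at hn
    linarith
  refine Tendsto.congr' ?_ (h2.div h1 hP.ne')
  filter_upwards [hev] with n hn
  show (dist (x n) a / t n) / (dist (x n) a / r n) = r n / t n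
  rw [div_div_div_cancel_left' _ _ hn.ne']

/-- If two normalizing sequences are equivalent at `a`, then either their ratio converges to
a positive constant, or both are confluented at `a`. -/
theorem stmt_5 {X : Type*} [MetricSpace X] (a : X) (r t : ℕ → ℝ)
    (hr : Normalizing r) (ht : Normalizing t) (heq : EquivAt a r t) :
    (∃ c : ℝ, 0 < c ∧ Tendsto (fun n => r n / t n) atTop (nhds c)) ∨
      (Confluented a r ∧ Confluented a t) := by
  by_cases hc : Confluented a r ∧ Confluented a t
  · exact Or.inr hc
  left
  rw [not_and_or] at hc
  rcases hc with hc | hc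
  · unfold Confluented at hc
    push_neg at hc
    obtain ⟨x, hxs, hx0⟩ := hc
    obtain ⟨L, hL⟩ := hxs
    have hL0 : 0 ≤ L := ge_of_tendsto' hL fun n => div_nonneg dist_nonneg (hr.1 n).le
    have hLpos : 0 < L := hL0.lt_of_ne fun h => hx0 (h ▸ hL)
    obtain ⟨M, hM, hMt⟩ := keyA a r t hr.1 ht.1 heq x hLpos hL
    exact ⟨M / L, div_pos hM hLpos, keyB a r t hr.1 ht.1 x hLpos hL hMt⟩
  · unfold Confluented at hc
    push_neg at hc
    obtain ⟨x, hxs, hx0⟩ := hc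
    obtain ⟨L, hL⟩ := hxs
    have hL0 : 0 ≤ L := ge_of_tendsto' hL fun n => div_nonneg dist_nonneg (ht.1 n).le
    have hLpos : 0 < L := hL0.lt_of_ne fun h => hx0 (h ▸ hL)
    have heq' : EquivAt a t r := fun F hF => (heq F hF).symm
    obtain ⟨M, hM, hMt⟩ := keyA a t r ht.1 hr.1 heq' x hLpos hL
    exact ⟨L / M, div_pos hLpos hM, keyB a r t hr.1 ht.1 x hM hMt hL⟩
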